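/- Entropy conservation of the EC flux (Theorem 1). Let left and right ideal MHD states be given (both with ρ > 0, p > 0) and define the numerical flux f* ∈ ℝ⁸ componentwise by f₁* = ⟨z₂⟩·z₅ˡⁿ; f₂* = ⟨z₅⟩/⟨z₁⟩ + ⟨z₂⟩²·z₅ˡⁿ/⟨z₁⟩ + (⟨z₆²⟩ + ⟨z₇²⟩ + ⟨z₈²⟩)/2 − ⟨z₆²⟩; f₃* = ⟨z₂⟩⟨z₃⟩·z₅ˡⁿ/⟨z₁⟩ − ⟨z₆z₇⟩; f₄* = ⟨z₂⟩⟨z₄⟩·z₅ˡⁿ/⟨z₁⟩ − ⟨z₆z₈⟩; f₅* = (γ/(γ−1))·(⟨z₂⟩/⟨z₁⟩)·( ((γ+1)/(2γ))·z₅ˡⁿ/z₁ˡⁿ + ((γ−1)/(2γ))·⟨z₅⟩/⟨z₁⟩ ) + (⟨z₂⟩·z₅ˡⁿ/2)·(⟨z₂⟩² + ⟨z₃⟩² + ⟨z₄⟩²)/⟨z₁⟩² + (⟨z₇⟩/⟨z₁²⟩)·(⟨z₁z₂⟩⟨z₇⟩ − ⟨z₁z₃⟩⟨z₆⟩) + (⟨z₈⟩/⟨z₁²⟩)·(⟨z₁z₂⟩⟨z₈⟩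 − ⟨z₁z₄⟩⟨z₆⟩); f₆* = 0; f₇* = (⟨z₁z₂⟩⟨z₇⟩ − ⟨z₁z₃⟩⟨z₆⟩)/⟨z₁²⟩; f₈* = (⟨z₁z₂⟩⟨z₈⟩ − ⟨z₁z₄⟩⟨z₆⟩)/⟨z₁²⟩. Then the discrete entropy conservation condition holds: ⟦v⃗⟧·f* = ⟦ρu⟧ + ⟦ρu‖B⃗‖²/(2p)⟧ − ⟦ρB₁(u⃗·B⃗)/p⟧ + ⟦B₁⟧·(⟨z₁z₂⟩⟨z₆⟩ + ⟨z₁z₃⟩⟨z₇⟩ + ⟨z₁z₄⟩⟨z₈⟩), where the last term is minus the contribution −⟨Δx v⃗⟩ᵀs of the paper's Janhunen source term discretization. -/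

import Mathlib

open Real Matrix

/-- An ideal MHD state: density, velocity components, pressure, magnetic field components. -/
structure MHD where
  ρ : ℝ
  u : ℝ
  v : ℝ
  w : ℝ
  p : ℝ
  B1 : ℝ
  B2 : ℝ
  B3 : ℝ

namespace MHD

noncomputable section

/-- ‖u⃗‖² -/
def uSq (S : MHD) : ℝ := S.u ^ 2 + S.v ^ 2 + S.w ^ 2

/-- ‖B⃗‖² -/
def BSq (S : MHD) : ℝ := S.B1 ^ 2 + S.B2 ^ 2 + S.B3 ^ 2

/-- u⃗·B⃗ -/
def uDotB (S : MHD) : ℝ := S.u * S.B1 + S.v * S.B2 + S.w * S.B3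

/-- physical entropy s = ln p − γ ln ρ -/
def ent (γ : ℝ) (S : MHD) : ℝ := Real.log S.p - γ * Real.log S.ρ

/-- total energy density ρe -/
def rhoE (γ : ℝ) (S : MHD) : ℝ := S.p / (γ - 1) + S.ρ * S.uSq / 2 + S.BSq / 2

/-- entropy density U = −ρs/(γ−1) -/
def entU (γ : ℝ) (S : MHD) : ℝ := -(S.ρ * S.ent γ) / (γ - 1)

/-- x-direction entropy flux F = uU -/
def entF (γ : ℝ) (S : MHD) : ℝ := S.u * S.entU γ

/-- the entropy variables v⃗ = U_q -/
def entVar (γ : ℝ) (S : MHD) : Fin 8 → ℝ :=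
  ![(γ - S.ent γ) / (γ - 1) - S.ρ * S.uSq / (2 * S.p),
    S.ρ * S.u / S.p, S.ρ * S.v / S.p, S.ρ * S.w / S.p,
    -(S.ρ / S.p), S.ρ * S.B1 / S.p, S.ρ * S.B2 / S.p, S.ρ * S.B3 / S.p]

/-- x-direction physical flux f⃗ -/
def fluxX (γ : ℝ) (S : MHD) : Fin 8 → ℝ :=
  ![S.ρ * S.u,
    S.ρ * S.u ^ 2 + S.p + S.BSq / 2 - S.B1 ^ 2,
    S.ρ * S.u * S.v - S.B1 * S.B2,
    S.ρ * S.u * S.w - S.B1 * S.B3,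
    S.u * (S.rhoE γ + S.p + S.BSq / 2) - S.B1 * S.uDotB,
    0,
    S.u * S.B2 - S.v * S.B1,
    S.u * S.B3 - S.w * S.B1]

/-- the parameter vector z -/
def z (S : MHD) : Fin 8 → ℝ :=
  ![Real.sqrt (S.ρ / S.p), Real.sqrt (S.ρ / S.p) * S.u, Real.sqrt (S.ρ / S.p) * S.v,
    Real.sqrt (S.ρ / S.p) * S.w, Real.sqrt (S.ρ * S.p), S.B1, S.B2, S.B3]

end

end MHD

noncomputable section

open MHD

/-- logarithmic mean: (x−y)/(ln x − ln y), with the consistent value x when x = y. -/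
def lm (x y : ℝ) : ℝ := if x = y then x else (x - y) / (Real.log x - Real.log y)

/-- arithmetic mean -/
def am (x y : ℝ) : ℝ := (x + y) / 2

/-- ⟨z_i⟩ (note: `zA L R 0` is ⟨z₁⟩, …, `zA L R 7` is ⟨z₈⟩) -/
def zA (L R : MHD) (i : Fin 8) : ℝ := am (L.z i) (R.z i)

/-- ⟨z_i z_j⟩ -/
def zP (L R : MHD) (i j : Fin 8) : ℝ := am (L.z i * L.z j) (R.z i * R.z j)

/-- ⟨z₁z₂⟩⟨z₆⟩ + ⟨z₁z₃⟩⟨z₇⟩ + ⟨z₁z₄⟩⟨z₈⟩, the x-direction source factor -/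
def srcX (L R : MHD) : ℝ :=
  zP L R 0 1 * zA L R 5 + zP L R 0 2 * zA L R 6 + zP L R 0 3 * zA L R 7

/-- the entropy conserving numerical flux of Theorem 1 (x-direction) -/
def ecFlux (γ : ℝ) (L R : MHD) : Fin 8 → ℝ :=
  ![zA L R 1 * lm (L.z 4) (R.z 4),
    zA L R 4 / zA L R 0 + (zA L R 1) ^ 2 * lm (L.z 4) (R.z 4) / zA L R 0
      + (zP L R 5 5 + zP L R 6 6 + zP L R 7 7) / 2 - zP L R 5 5,
    zA L R 1 * zA L R 2 * lm (L.z 4) (R.z 4) / zA L R 0 - zP L R 5 6,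
    zA L R 1 * zA L R 3 * lm (L.z 4) (R.z 4) / zA L R 0 - zP L R 5 7,
    (γ / (γ - 1)) * (zA L R 1 / zA L R 0) *
        (((γ + 1) / (2 * γ)) * lm (L.z 4) (R.z 4) / lm (L.z 0) (R.z 0)
          + ((γ - 1) / (2 * γ)) * (zA L R 4 / zA L R 0))
      + zA L R 1 * lm (L.z 4) (R.z 4) / 2 *
          ((zA L R 1) ^ 2 + (zA L R 2) ^ 2 + (zA L R 3) ^ 2) / (zA L R 0) ^ 2
      + (zA L R 6 / zP L R 0 0) * (zP L R 0 1 * zA L R 6 - zP L R 0 2 * zA L R 5)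
      + (zA L R 7 / zP L R 0 0) * (zP L R 0 1 * zA L R 7 - zP L R 0 3 * zA L R 5),
    0,
    (zP L R 0 1 * zA L R 6 - zP L R 0 2 * zA L R 5) / zP L R 0 0,
    (zP L R 0 1 * zA L R 7 - zP L R 0 3 * zA L R 5) / zP L R 0 0]

end

private lemma lm_pos' {x y : ℝ} (hx : 0 < x) (hy : 0 < y) : 0 < lm x y := by
  unfold lm
  split_ifs with h
  · exact hx
  · rcases lt_or_gt_of_ne h with hlt | hgt
    · have := Real.log_lt_log hx hlt
      exact div_pos_of_neg_of_neg (by linarith) (by linarith)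
    · have := Real.log_lt_log hy hgt
      exact div_pos (by linarith) (by linarith)

private lemma log_lm' {x y : ℝ} (hx : 0 < x) (hy : 0 < y) :
    Real.log y = Real.log x + (y - x) / lm x y := by
  unfold lm
  split_ifs with h
  · simp [h]
  · have hlog : Real.log x ≠ Real.log y := by
      intro hc
      exact h (Real.log_injOn_pos (Set.mem_Ioi.mpr hx) (Set.mem_Ioi.mpr hy) hc)
    have h1 : x - y ≠ 0 := sub_ne_zero.mpr h
    have h2 : Real.log x - Real.log y ≠ 0 := sub_ne_zero.mpr hlog
    rw [div_div_eq_mul_div]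
    field_simp
    ring

private lemma vec8_five {α : Type*} (x0 x1 x2 x3 x4 x5 x6 x7 : α) :
    ![x0,x1,x2,x3,x4,x5,x6,x7] 5 = x5 := rfl
private lemma vec8_six {α : Type*} (x0 x1 x2 x3 x4 x5 x6 x7 : α) :
    ![x0,x1,x2,x3,x4,x5,x6,x7] 6 = x6 := rfl
private lemma vec8_seven {α : Type*} (x0 x1 x2 x3 x4 x5 x6 x7 : α) :
    ![x0,x1,x2,x3,x4,x5,x6,x7] 7 = x7 := rfl

set_option maxHeartbeats 1600000 in
private lemma hydro_id (γ a b e f uL vL wL uR vR wR M1 M5 : ℝ)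
    (hγ1 : γ - 1 ≠ 0) (hγ0 : γ ≠ 0) (hab : a + b ≠ 0) (hM1 : M1 ≠ 0) (hM5 : M5 ≠ 0) :
    ((f - e) / M5 + (γ + 1) / (γ - 1) * ((b - a) / M1) -
        (b * b * (uR ^ 2 + vR ^ 2 + wR ^ 2) / 2 - a * a * (uL ^ 2 + vL ^ 2 + wL ^ 2) / 2)) *
      ((a * uL + b * uR) / 2 * M5)
    + (b * b * uR - a * a * uL) *
        ((e + f) / 2 / ((a + b) / 2) + ((a * uL + b * uR) / 2) ^ 2 * M5 / ((a + b) / 2))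
    + (b * b * vR - a * a * vL) *
        ((a * uL + b * uR) / 2 * ((a * vL + b * vR) / 2) * M5 / ((a + b) / 2))
    + (b * b * wR - a * a * wL) *
        ((a * uL + b * uR) / 2 * ((a * wL + b * wR) / 2) * M5 / ((a + b) / 2))
    - (b * b - a * a) *
        (γ / (γ - 1) * ((a * uL + b * uR) / 2 / ((a + b) / 2)) *
            ((γ + 1) / (2 * γ) * M5 / M1 + (γ - 1) / (2 * γ) * ((e + f) / 2 / ((a + b) / 2)))
          + (a * uL + b * uR) / 2 * M5 / 2 *
              (((a * uL + b * uR) / 2) ^ 2 + ((a * vL + b * vR) / 2) ^ 2 +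
                ((a * wL + b * wR) / 2) ^ 2) / ((a + b) / 2) ^ 2)
    = b * f * uR - a * e * uL := by
  field_simp
  ring

set_option maxHeartbeats 1600000 in
private lemma mag_id (a b uL vL wL uR vR wR B1L B2L B3L B1R B2R B3R : ℝ)
    (h : a * a + b * b ≠ 0) :
    (b * b * uR - a * a * uL) *
        (((B1L * B1L + B1R * B1R) / 2 + (B2L * B2L + B2R * B2R) / 2 +
            (B3L * B3L + B3R * B3R) / 2) / 2 - (B1L * B1L + B1R * B1R) / 2)
    + (b * b * vR - a * a * vL) * (-((B1L * B2L + B1R * B2R) / 2))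
    + (b * b * wR - a * a * wL) * (-((B1L * B3L + B1R * B3R) / 2))
    - (b * b - a * a) *
        ((B2L + B2R) / 2 / ((a * a + b * b) / 2) *
            ((a * (a * uL) + b * (b * uR)) / 2 * ((B2L + B2R) / 2) -
              (a * (a * vL) + b * (b * vR)) / 2 * ((B1L + B1R) / 2))
          + (B3L + B3R) / 2 / ((a * a + b * b) / 2) *
            ((a * (a * uL) + b * (b * uR)) / 2 * ((B3L + B3R) / 2) -
              (a * (a * wL) + b * (b * wR)) / 2 * ((B1L + B1R) / 2)))
    + (b * b * B2R - a * a * B2L) *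
        (((a * (a * uL) + b * (b * uR)) / 2 * ((B2L + B2R) / 2) -
            (a * (a * vL) + b * (b * vR)) / 2 * ((B1L + B1R) / 2)) / ((a * a + b * b) / 2))
    + (b * b * B3R - a * a * B3L) *
        (((a * (a * uL) + b * (b * uR)) / 2 * ((B3L + B3R) / 2) -
            (a * (a * wL) + b * (b * wR)) / 2 * ((B1L + B1R) / 2)) / ((a * a + b * b) / 2))
    = (b * b * uR * (B1R ^ 2 + B2R ^ 2 + B3R ^ 2) / 2 -
        a * a * uL * (B1L ^ 2 + B2L ^ 2 + B3L ^ 2) / 2)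
      - (b * b * B1R * (uR * B1R + vR * B2R + wR * B3R) -
          a * a * B1L * (uL * B1L + vL * B2L + wL * B3L))
      + (B1R - B1L) *
        ((a * (a * uL) + b * (b * uR)) / 2 * ((B1L + B1R) / 2) +
          (a * (a * vL) + b * (b * vR)) / 2 * ((B2L + B2R) / 2) +
          (a * (a * wL) + b * (b * wR)) / 2 * ((B3L + B3R) / 2)) := by
  have h2 : b ^ 2 + a ^ 2 ≠ 0 := by rw [sq, sq, add_comm]; exact h
  field_simp
  ring_nf
  field_simp
  ring

set_option maxHeartbeats 3200000
set_option maxRecDepth 40000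

/-- entropy conservation of the EC flux (Theorem 1):
⟦v⃗⟧·f* = ⟦ρu⟧ + ⟦ρu‖B⃗‖²/(2p)⟧ − ⟦ρB₁(u⃗·B⃗)/p⟧ + ⟦B₁⟧·(⟨z₁z₂⟩⟨z₆⟩ + ⟨z₁z₃⟩⟨z₇⟩ + ⟨z₁z₄⟩⟨z₈⟩). -/
theorem ec_flux_entropy_conservation (γ : ℝ) (hγ : 1 < γ) (L R : MHD)
    (hρL : 0 < L.ρ) (hpL : 0 < L.p) (hρR : 0 < R.ρ) (hpR : 0 < R.p) :
    (∑ i : Fin 8, (R.entVar γ i - L.entVar γ i) * ecFlux γ L R i) =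
      (R.ρ * R.u - L.ρ * L.u)
      + (R.ρ * R.u * R.BSq / (2 * R.p) - L.ρ * L.u * L.BSq / (2 * L.p))
      - (R.ρ * R.B1 * R.uDotB / R.p - L.ρ * L.B1 * L.uDotB / L.p)
      + (R.B1 - L.B1) * srcX L R := by
  have hγ1 : γ - 1 ≠ 0 := by linarith
  have hγ0 : γ ≠ 0 := by linarith
  simp only [Fin.sum_univ_eight, MHD.entVar, ecFlux, zA, zP, am, MHD.z, srcX, MHD.ent,
    MHD.uSq, MHD.BSq, MHD.uDotB, Matrix.cons_val_zero, Matrix.cons_val_one, Matrix.head_cons,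
    Matrix.cons_val_two, Matrix.tail_cons, Matrix.cons_val_three, Matrix.cons_val_four,
    Matrix.cons_val_fin_one, Matrix.cons_val', Matrix.cons_val_succ, vec8_five, vec8_six, vec8_seven]
  set a := Real.sqrt (L.ρ / L.p) with ha_def
  set b := Real.sqrt (R.ρ / R.p) with hb_def
  set e := Real.sqrt (L.ρ * L.p) with he_def
  set f := Real.sqrt (R.ρ * R.p) with hf_def
  have ha : 0 < a := Real.sqrt_pos.mpr (div_pos hρL hpL)
  have hb : 0 < b := Real.sqrt_pos.mpr (div_pos hρR hpR)
  have he : 0 < e := Real.sqrt_pos.mpr (mul_pos hρL hpL)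
  have hf : 0 < f := Real.sqrt_pos.mpr (mul_pos hρR hpR)
  have hρLa : L.ρ = a * e := by
    rw [ha_def, he_def, ← Real.sqrt_mul (div_pos hρL hpL).le,
      show L.ρ / L.p * (L.ρ * L.p) = L.ρ ^ 2 by field_simp,
      Real.sqrt_sq hρL.le]
  have hρRb : R.ρ = b * f := by
    rw [hb_def, hf_def, ← Real.sqrt_mul (div_pos hρR hpR).le,
      show R.ρ / R.p * (R.ρ * R.p) = R.ρ ^ 2 by field_simp,
      Real.sqrt_sq hρR.le]
  have hpLa : L.p = e / a := by
    rw [he_def, ha_def, ← Real.sqrt_div (mul_pos hρL hpL).le,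
      show L.ρ * L.p / (L.ρ / L.p) = L.p ^ 2 by field_simp,
      Real.sqrt_sq hpL.le]
  have hpRb : R.p = f / b := by
    rw [hf_def, hb_def, ← Real.sqrt_div (mul_pos hρR hpR).le,
      show R.ρ * R.p / (R.ρ / R.p) = R.p ^ 2 by field_simp,
      Real.sqrt_sq hpR.le]
  have hM1 : 0 < lm a b := lm_pos' ha hb
  have hM5 : 0 < lm e f := lm_pos' he hf
  rw [hρLa, hρRb, hpLa, hpRb, Real.log_div he.ne' ha.ne', Real.log_mul ha.ne' he.ne',
    Real.log_div hf.ne' hb.ne', Real.log_mul hb.ne' hf.ne',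
    log_lm' ha hb, log_lm' he hf]
  set M1 := lm a b with hM1_def
  set M5 := lm e f with hM5_def
  set La := Real.log a
  set Le := Real.log e
  have hab : a + b ≠ 0 := by positivity
  have haabb : a * a + b * b ≠ 0 := by positivity
  rw [show (γ - (Le + (f - e) / M5 - (La + (b - a) / M1) -
            γ * (La + (b - a) / M1 + (Le + (f - e) / M5)))) / (γ - 1) -
        b * f * (R.u ^ 2 + R.v ^ 2 + R.w ^ 2) / (2 * (f / b)) -
        ((γ - (Le - La - γ * (La + Le))) / (γ - 1) -
          a * e * (L.u ^ 2 + L.v ^ 2 + L.w ^ 2) / (2 * (e / a)))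
      = (f - e) / M5 + (γ + 1) / (γ - 1) * ((b - a) / M1) -
        (b * b * (R.u ^ 2 + R.v ^ 2 + R.w ^ 2) / 2 -
          a * a * (L.u ^ 2 + L.v ^ 2 + L.w ^ 2) / 2) from by
        field_simp
        ring]
  rw [show b * f * R.u / (f / b) - a * e * L.u / (e / a) = b * b * R.u - a * a * L.u from by
        field_simp,
      show b * f * R.v / (f / b) - a * e * L.v / (e / a) = b * b * R.v - a * a * L.v from by
        field_simp,
      show b * f * R.w / (f / b) - a * e * L.w / (e / a) = b * b * R.w - a * a * L.w from by
        field_simp,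
      show -(b * f / (f / b)) - -(a * e / (e / a)) = -(b * b - a * a) from by
        field_simp; ring,
      show b * f * R.B1 / (f / b) - a * e * L.B1 / (e / a) = b * b * R.B1 - a * a * L.B1 from by
        field_simp,
      show b * f * R.B2 / (f / b) - a * e * L.B2 / (e / a) = b * b * R.B2 - a * a * L.B2 from by
        field_simp,
      show b * f * R.B3 / (f / b) - a * e * L.B3 / (e / a) = b * b * R.B3 - a * a * L.B3 from by
        field_simp,
      show b * f * R.u * (R.B1 ^ 2 + R.B2 ^ 2 + R.B3 ^ 2) / (2 * (f / b)) -
          a * e * L.u * (L.B1 ^ 2 + L.B2 ^ 2 + L.B3 ^ 2) / (2 * (e / a))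
        = b * b * R.u * (R.B1 ^ 2 + R.B2 ^ 2 + R.B3 ^ 2) / 2 -
          a * a * L.u * (L.B1 ^ 2 + L.B2 ^ 2 + L.B3 ^ 2) / 2 from by
        field_simp,
      show b * f * R.B1 * (R.u * R.B1 + R.v * R.B2 + R.w * R.B3) / (f / b) -
          a * e * L.B1 * (L.u * L.B1 + L.v * L.B2 + L.w * L.B3) / (e / a)
        = b * b * R.B1 * (R.u * R.B1 + R.v * R.B2 + R.w * R.B3) -
          a * a * L.B1 * (L.u * L.B1 + L.v * L.B2 + L.w * L.B3) from by
        field_simp]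
  set_option maxRecDepth 40000 in
  set_option maxHeartbeats 1600000 in
  linear_combination
    hydro_id γ a b e f L.u L.v L.w R.u R.v R.w M1 M5 hγ1 hγ0 hab hM1.ne' hM5.ne' +
    mag_id a b L.u L.v L.w R.u R.v R.w L.B1 L.B2 L.B3 R.B1 R.B2 R.B3 haabb
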